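/- Let R > 1, σ ∈ (0,1), and define α = sup_{k≥0} (k+2)/(R^{1-σ})^{k+1}. Then α is finite, and for every N ∈ ℕ, ∑_{k=0}^∞ (k+1)(k+2)⋯(k+N) / R^{k+N} ≤ C (αe/R^σ)^N N! √(N) for some constant C independent of N (with the convention that the empty product for N=0 is 1 and the right side is replaced by C). -/

import Mathlib

open Nat Real

theorem gevrey_sum_estimate (R σ : ℝ) (hR : 1 < R) (hσ : σ ∈ Set.Ioo (0:ℝ) 1) :
    BddAbove (Set.range fun k : ℕ => ((k : ℝ) + 2) / (R ^ ((1:ℝ) - σ)) ^ (k + 1)) ∧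
    ∃ C : ℝ, 0 < C ∧ (∑' k : ℕ, (1:ℝ) / R ^ k ≤ C) ∧
      ∀ N : ℕ, 1 ≤ N →
        ∑' k : ℕ, (((k + N)! : ℝ) / (k ! : ℝ)) / R ^ (k + N) ≤
          C * ((⨆ k : ℕ, ((k : ℝ) + 2) / (R ^ ((1:ℝ) - σ)) ^ (k + 1)) *
                Real.exp 1 / R ^ σ) ^ N * (N ! : ℝ) * Real.sqrt N := by
  obtain ⟨hσ0, hσ1⟩ := hσ
  have hR0 : (0:ℝ) < R := by linarith
  have hRne : R ≠ 0 := ne_of_gt hR0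
  have hR1 : (0:ℝ) < R - 1 := by linarith
  have hlogR : 0 < Real.log R := Real.log_pos hR
  set L : ℝ := (1 - σ) * Real.log R with hL_def
  have hL : 0 < L := mul_pos (by linarith) hlogR
  set r : ℝ := R ^ ((1:ℝ) - σ) with hr_def
  have hr_exp : r = Real.exp L := by
    rw [hr_def, Real.rpow_def_of_pos hR0, hL_def, mul_comm]
  have hr1 : 1 < r := by
    rw [hr_exp]; calc (1:ℝ) = Real.exp 0 := (Real.exp_zero).symm
      _ < Real.exp L := Real.exp_lt_exp.2 hL
  have hr0 : 0 < r := lt_trans one_pos hr1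
  -- BddAbove
  have hbdd : BddAbove (Set.range fun k : ℕ => ((k : ℝ) + 2) / r ^ (k + 1)) := by
    refine ⟨2 / (r - 1), ?_⟩
    rintro x ⟨k, rfl⟩
    have hk1 : (0:ℝ) < (k : ℝ) + 1 := by positivity
    have h1 : ((k : ℝ) + 1) * (r - 1) ≤ r ^ (k + 1) := by
      have h2 := one_add_mul_le_pow (by linarith : (-2:ℝ) ≤ r - 1) (k + 1)
      have h3 : (1 : ℝ) + (↑(k+1)) * (r - 1) ≤ (1 + (r-1)) ^ (k+1) := h2
      rw [show (1:ℝ) + (r - 1) = r by ring] at h3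
      push_cast at h3
      linarith
    have hpos : (0:ℝ) < ((k : ℝ) + 1) * (r - 1) := by
      apply mul_pos hk1; linarith
    calc ((k : ℝ) + 2) / r ^ (k + 1) ≤ ((k : ℝ) + 2) / (((k : ℝ) + 1) * (r - 1)) := by
          apply div_le_div_of_nonneg_left (by positivity) hpos h1
      _ ≤ 2 / (r - 1) := by
          rw [div_le_div_iff₀ hpos (by linarith)]
          nlinarith
  refine ⟨hbdd, ?_⟩
  set α : ℝ := ⨆ k : ℕ, ((k : ℝ) + 2) / r ^ (k + 1) with hα_def
  -- geometric sum
  have hx1 : (1 : ℝ) / R < 1 := by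
    rw [div_lt_one hR0]; linarith
  have hx0 : (0 : ℝ) ≤ 1 / R := by positivity
  have hgeom : ∑' k : ℕ, (1:ℝ) / R ^ k = R / (R - 1) := by
    have h := tsum_geometric_of_lt_one hx0 hx1
    have heq : ∀ k : ℕ, (1:ℝ) / R ^ k = (1/R) ^ k := by
      intro k; rw [div_pow, one_pow]
    rw [tsum_congr heq, h]
    rw [eq_div_iff (ne_of_gt hR1)]
    field_simp
  -- the key analytic estimate : R^σ ≤ α * e * (R-1)
  have hcore : R ^ σ ≤ α * Real.exp 1 * (R - 1) := by
    set k₀ : ℕ := ⌈1 / L - 1⌉₊ with hk₀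
    have h1 : 1 / L ≤ (k₀ : ℝ) + 1 := by
      have := Nat.le_ceil (1 / L - 1)
      linarith
    have h2 : (k₀ : ℝ) ≤ 1 / L := by
      rcases le_or_gt (1 / L - 1) 0 with h | h
      · have : k₀ = 0 := Nat.ceil_eq_zero.2 h
        rw [this]; push_cast; positivity
      · have := Nat.ceil_lt_add_one (le_of_lt h)
        rw [← hk₀] at this
        linarith
    -- r ^ (k₀+1) ≤ e * r
    have hrk : r ^ (k₀ + 1) ≤ Real.exp 1 * r := by
      rw [hr_exp, ← Real.exp_nat_mul, ← Real.exp_add]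
      apply Real.exp_le_exp.2
      have : ((k₀ + 1 : ℕ) : ℝ) * L ≤ (1 / L + 1) * L := by
        apply mul_le_mul_of_nonneg_right _ (le_of_lt hL)
        push_cast; linarith
      calc ((k₀ + 1 : ℕ) : ℝ) * L ≤ (1 / L + 1) * L := this
        _ = 1 + L := by field_simp
    -- (k₀+2) * (R-1) ≥ R
    have hLR : L ≤ R - 1 := by
      have h3 : Real.log R ≤ R - 1 := by
        have := Real.log_le_sub_one_of_pos hR0
        linarith
      calc L ≤ 1 * Real.log R := by
            apply mul_le_mul_of_nonneg_right (by linarith) (le_of_lt hlogR)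
        _ = Real.log R := one_mul _
        _ ≤ R - 1 := h3
    have hkR : R ≤ ((k₀ : ℝ) + 2) * (R - 1) := by
      have h4 : (1:ℝ) ≤ 1 / L * (R - 1) := by
        rw [div_mul_eq_mul_div, one_mul, le_div_iff₀ hL]
        linarith
      nlinarith [h1, hL, hR1]
    -- R^σ = R / r
    have hRσ : R ^ σ * r = R := by
      rw [hr_def, ← Real.rpow_add hR0]
      norm_num
    have hfk : R ^ σ ≤ (((k₀ : ℝ) + 2) / r ^ (k₀ + 1)) * Real.exp 1 * (R - 1) := by
      rw [div_mul_eq_mul_div, div_mul_eq_mul_div, le_div_iff₀ (by positivity)]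
      calc R ^ σ * r ^ (k₀ + 1) ≤ R ^ σ * (Real.exp 1 * r) := by
            apply mul_le_mul_of_nonneg_left hrk (le_of_lt (Real.rpow_pos_of_pos hR0 σ))
        _ = Real.exp 1 * (R ^ σ * r) := by ring
        _ = Real.exp 1 * R := by rw [hRσ]
        _ ≤ Real.exp 1 * (((k₀ : ℝ) + 2) * (R - 1)) := by
            apply mul_le_mul_of_nonneg_left hkR (le_of_lt (Real.exp_pos 1))
        _ = ((k₀ : ℝ) + 2) * Real.exp 1 * (R - 1) := by ring
    have hle : (((k₀ : ℝ) + 2) / r ^ (k₀ + 1)) ≤ α :=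
      le_ciSup hbdd k₀
    calc R ^ σ ≤ (((k₀ : ℝ) + 2) / r ^ (k₀ + 1)) * Real.exp 1 * (R - 1) := hfk
      _ ≤ α * Real.exp 1 * (R - 1) := by
          apply mul_le_mul_of_nonneg_right _ (le_of_lt hR1)
          apply mul_le_mul_of_nonneg_right hle (le_of_lt (Real.exp_pos 1))
  have hRσpos : (0:ℝ) < R ^ σ := Real.rpow_pos_of_pos hR0 σ
  have hαpos : 0 < α := by
    have h0 : (0:ℝ) < ((0:ℕ) : ℝ) + 2 := by norm_num
    have := le_ciSup hbdd 0
    have hf0 : (0:ℝ) < (((0:ℕ) : ℝ) + 2) / r ^ (0 + 1) := by positivity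
    linarith
  -- 1/(R-1) ≤ α e / R^σ
  have hbase : 1 / (R - 1) ≤ α * Real.exp 1 / R ^ σ := by
    rw [div_le_div_iff₀ hR1 hRσpos]
    linarith [hcore]
  refine ⟨R / (R - 1), by positivity, le_of_eq hgeom, ?_⟩
  intro N hN
  -- compute the tsum exactly
  have hnorm : ‖(1/R : ℝ)‖ < 1 := by
    rw [Real.norm_eq_abs, abs_of_nonneg hx0]; exact hx1
  have hsum := (hasSum_choose_mul_geometric_of_norm_lt_one N hnorm).mul_left
    ((N ! : ℝ) / R ^ N)
  have hfun : ∀ k : ℕ, ((N ! : ℝ) / R ^ N) * (((k + N).choose N : ℝ) * (1/R) ^ k)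
      = (((k + N)! : ℝ) / (k ! : ℝ)) / R ^ (k + N) := by
    intro k
    have hfac : ((k + N)! : ℝ) = ((k + N).choose N : ℝ) * (N ! : ℝ) * (k ! : ℝ) := by
      have := Nat.choose_mul_factorial_mul_factorial (Nat.le_add_left N k)
      have h5 : (k + N).choose N * N ! * k ! = (k + N)! := by
        simpa using this
      exact_mod_cast h5.symm
    have hkne : (k ! : ℝ) ≠ 0 := by positivity
    rw [hfac, pow_add]
    rw [one_div_pow]
    field_simp
  have htsum : ∑' k : ℕ, (((k + N)! : ℝ) / (k ! : ℝ)) / R ^ (k + N)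
      = (N ! : ℝ) * R / (R - 1) ^ (N + 1) := by
    rw [← tsum_congr hfun, hsum.tsum_eq]
    have h6 : (1 : ℝ) - 1/R = (R - 1) / R := by field_simp
    rw [h6, div_pow]
    have h7 : ((R - 1) : ℝ) ^ (N + 1) ≠ 0 := by positivity
    field_simp
    ring
  rw [htsum]
  -- final comparison
  have hsqrt : 1 ≤ Real.sqrt N := by
    rw [show (1:ℝ) = Real.sqrt 1 by simp]
    apply Real.sqrt_le_sqrt
    exact_mod_cast hN
  have hb0 : (0:ℝ) ≤ 1 / (R - 1) := by positivity
  have hpow : (1 / (R - 1)) ^ N ≤ (α * Real.exp 1 / R ^ σ) ^ N :=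
    pow_le_pow_left₀ hb0 hbase N
  have hNfac : (0:ℝ) < (N ! : ℝ) := by positivity
  have hval : (N ! : ℝ) * R / (R - 1) ^ (N + 1)
      = (R / (R - 1)) * (1 / (R - 1)) ^ N * (N ! : ℝ) * 1 := by
    rw [pow_succ]
    rw [one_div_pow]
    field_simp
  rw [hval]
  have hC : (0:ℝ) ≤ R / (R - 1) := by positivity
  apply mul_le_mul _ hsqrt (by norm_num) (by positivity)
  exact mul_le_mul_of_nonneg_right (mul_le_mul_of_nonneg_left hpow hC) (le_of_lt hNfac)
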